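/- Let W ∈ ℂ, let (B_i) be the base W-Fibonacci sequence and suppose B_N = 0 with W ≠ 0. Let (F_i), (G_i) be W-Fibonacci sequences with F_0 = z_1 z_2 W, F_1 = z_1(z_3−z_2), G_1 = z_3−z_2, G_2 = z_1 W for nonzero complex numbers z_1, z_2, z_3 with z_3 ≠ z_2. Then F_1 G_{N+1} − F_{N+1} G_1 = 0 and F_0 G_{N+2} − F_N G_2 = 0. -/

import Mathlib

/-- A `W`-Fibonacci sequence: `F (i+1) = W * F i + F (i-1)` for all integers `i`. -/
def IsFib (W : ℂ) (F : ℤ → ℂ) : Prop := ∀ i : ℤ, F (i + 1) = W * F i + F (i - 1)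

lemma fib_zero_of_zero (W : ℂ) (D : ℤ → ℂ) (hD : IsFib W D)
    (h0 : D 0 = 0) (h1 : D 1 = 0) : ∀ i : ℤ, D i = 0 := by
  have key : ∀ i : ℤ, D i = 0 ∧ D (i + 1) = 0 := by
    intro i
    induction i using Int.induction_on with
    | zero => exact ⟨h0, h1⟩
    | succ k ih =>
      refine ⟨ih.2, ?_⟩
      have h := hD (k + 1)
      have e1 : (k : ℤ) + 1 - 1 = k := by ring
      rw [e1] at h
      rw [h, ih.1, ih.2]
      ring
    | pred k ih =>
      have h := hD (-k)
      have e1 : -(k : ℤ) - 1 = -(k + 1) := by ring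
      have e2 : -(k : ℤ) = -(k + 1) + 1 := by ring
      rw [e1] at h
      refine ⟨?_, ?_⟩
      · have hc : D (-(k : ℤ) - 1) = D (-k + 1) - W * D (-k) := by
          rw [e1, h]; ring
        rw [hc, ih.1, ih.2]; ring
      · have e3 : -(k : ℤ) - 1 + 1 = -k := by ring
        rw [e3]; exact ih.1
  exact fun i => (key i).1

lemma fib_eq_mul_base (W : ℂ) (B H : ℤ → ℂ) (hB : IsFib W B) (hH : IsFib W H)
    (hB0 : B 0 = 0) (hB1 : B 1 = 1) (hH0 : H 0 = 0) : ∀ i : ℤ, H i = H 1 * B i := by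
  have hD : IsFib W (fun i => H i - H 1 * B i) := by
    intro i
    simp only [hH i, hB i]
    ring
  have := fib_zero_of_zero W (fun i => H i - H 1 * B i) hD
    (by simp [hH0, hB0]) (by simp [hB1])
  intro i
  have h := this i
  linear_combination h

theorem torus_knot_closing_equations (W : ℂ) (hW : W ≠ 0)
    (B F G : ℤ → ℂ) (hB : IsFib W B) (hB0 : B 0 = 0) (hB1 : B 1 = 1)
    (N : ℤ) (hBN : B N = 0)
    (hF : IsFib W F) (hG : IsFib W G)
    (z1 z2 z3 : ℂ) (hz1 : z1 ≠ 0) (hz2 : z2 ≠ 0) (hz3 : z3 ≠ 0) (hz32 : z3 ≠ z2)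
    (hF0 : F 0 = z1 * z2 * W) (hF1 : F 1 = z1 * (z3 - z2))
    (hG1 : G 1 = z3 - z2) (hG2 : G 2 = z1 * W) :
    F 1 * G (N + 1) - F (N + 1) * G 1 = 0 ∧
    F 0 * G (N + 2) - F N * G 2 = 0 := by
  have hH : IsFib W (fun i => F 1 * G (i + 1) - F (i + 1) * G 1) := by
    intro i
    simp only
    have hg := hG (i + 1)
    have hf := hF (i + 1)
    have e1 : (i : ℤ) + 1 - 1 = i := by ring
    have e2 : (i : ℤ) - 1 + 1 = i := by ring
    rw [e1] at hg hf
    rw [show (i : ℤ) + 1 + 1 = i + 1 + 1 from rfl, hg, hf, e2]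
    ring
  have hH' : IsFib W (fun i => F 0 * G (i + 2) - F i * G 2) := by
    intro i
    simp only
    have hg := hG (i + 2)
    have hf := hF i
    have e1 : (i : ℤ) + 2 - 1 = i + 1 + 2 - 1 - 1 := by ring
    have e2 : (i : ℤ) + 1 + 2 = i + 2 + 1 := by ring
    have e3 : (i : ℤ) - 1 + 2 = i + 2 - 1 := by ring
    rw [e2, hg, hf, e3]
    ring
  have h1 := fib_eq_mul_base W B _ hB hH hB0 hB1 (by simp)
  have h2 := fib_eq_mul_base W B _ hB hH' hB0 hB1 (by simp)
  constructor
  · have := h1 N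
    rw [this, hBN]; ring
  · have := h2 N
    rw [this, hBN]; ring
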